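/- Let X be a complete CAT(0) space, F : X → ℝ a locally Lipschitz convex function, and p a non-critical point of F such that Σ_p X is compact. Let u_p ∈ Σ_p X be the unique direction minimizing D_p F on Σ_p X (the gradient direction of −F). Then for every v ∈ Σ_p X, D_p F(v) ≥ −|grad_p(−F)| cos∠_p(u_p, v), where |grad_p(−F)| = −D_p F(u_p). -/

import Mathlib

open Metric Filter Topology Set

noncomputable section

variable {X : Type*} [MetricSpace X]

/-- A unit-speed geodesic ray (parametrized on `[0, ∞)`). -/
def IsRay (γ : ℝ → X) : Prop :=
  ∀ ⦃s t : ℝ⦄, 0 ≤ s → 0 ≤ t → dist (γ s) (γ t) = |s - t|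

/-- Two rays are asymptotic: their pointwise distance is uniformly bounded. -/
def Asymp (γ σ : ℝ → X) : Prop :=
  ∃ C : ℝ, ∀ t : ℝ, 0 ≤ t → dist (γ t) (σ t) ≤ C

/-- A unit-speed minimizing geodesic from `x` to `y`, parametrized on `[0, dist x y]`. -/
def IsMinGeodesic (γ : ℝ → X) (x y : X) : Prop :=
  γ 0 = x ∧ γ (dist x y) = y ∧
    ∀ ⦃s t : ℝ⦄, s ∈ Set.Icc 0 (dist x y) → t ∈ Set.Icc 0 (dist x y) →
      dist (γ s) (γ t) = |s - t|

/-- Every pair of points is joined by a minimizing geodesic. -/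
def GeodesicSpace (X : Type*) [MetricSpace X] : Prop :=
  ∀ x y : X, ∃ γ : ℝ → X, IsMinGeodesic γ x y

/-- CAT(0): geodesic and satisfying the CN (Bruhat–Tits) inequality. -/
def IsCAT0 (X : Type*) [MetricSpace X] : Prop :=
  GeodesicSpace X ∧
    ∀ p q r m : X, dist q m = dist q r / 2 → dist m r = dist q r / 2 →
      dist p m ^ 2 ≤ (dist p q ^ 2 + dist p r ^ 2) / 2 - dist q r ^ 2 / 4

/-- A function convex along every minimizing geodesic. -/
def ConvexFun (F : X → ℝ) : Prop :=
  ∀ (x y : X) (γ : ℝ → X), IsMinGeodesic γ x y →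
    ConvexOn ℝ (Set.Icc 0 (dist x y)) (F ∘ γ)

/-- Euclidean comparison angle at `p` of the points `x`, `y`. -/
def compAngle (p x y : X) : ℝ :=
  Real.arccos ((dist p x ^ 2 + dist p y ^ 2 - dist x y ^ 2) / (2 * dist p x * dist p y))

/-- The (upper) angle at `p` between two curves emanating from `p`. -/
def angleAt (p : X) (γ σ : ℝ → X) : ℝ :=
  sInf {θ : ℝ | ∃ δ : ℝ, 0 < δ ∧
    θ = sSup {θ' : ℝ | ∃ s t : ℝ, s ∈ Set.Ioc 0 δ ∧ t ∈ Set.Ioc 0 δ ∧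
      θ' = compAngle p (γ s) (σ t)}}

/-- A unit-speed geodesic of length `ℓ` emanating from `p` (a direction at `p`). -/
def UnitGeodFrom (p : X) (γ : ℝ → X) (ℓ : ℝ) : Prop :=
  0 < ℓ ∧ γ 0 = p ∧
    ∀ ⦃s t : ℝ⦄, s ∈ Set.Icc 0 ℓ → t ∈ Set.Icc 0 ℓ → dist (γ s) (γ t) = |s - t|

/-- Intrinsic (angular) distance on the unit sphere of `ℝ³`. -/
def sdist (x y : EuclideanSpace ℝ (Fin 3)) : ℝ := Real.arccos (inner ℝ x y)

/-- CAT(1): points at distance < π are joined by geodesics, and geodesic triangles of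
perimeter < 2π satisfy comparison with triangles in the unit 2-sphere. -/
def IsCAT1 (Y : Type*) [MetricSpace Y] : Prop :=
  (∀ x y : Y, dist x y < Real.pi → ∃ γ : ℝ → Y, IsMinGeodesic γ x y) ∧
    ∀ (p q r : Y) (γ : ℝ → Y), IsMinGeodesic γ q r →
      dist p q + dist q r + dist r p < 2 * Real.pi →
      ∃ p' q' r' : EuclideanSpace ℝ (Fin 3), ‖p'‖ = 1 ∧ ‖q'‖ = 1 ∧ ‖r'‖ = 1 ∧
        sdist p' q' = dist p q ∧ sdist q' r' = dist q r ∧ sdist r' p' = dist r p ∧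
        ∀ t ∈ Set.Icc (0:ℝ) (dist q r), ∀ x' : EuclideanSpace ℝ (Fin 3), ‖x'‖ = 1 →
          sdist q' x' = t → sdist x' r' = dist q r - t → dist p (γ t) ≤ sdist p' x'

/-- Covering dimension ≤ n: every open cover has an open refinement of order ≤ n+1. -/
def CovDimLE (Y : Type*) [TopologicalSpace Y] (n : ℕ) : Prop :=
  ∀ U : Set (Set Y), (∀ u ∈ U, IsOpen u) → ⋃₀ U = Set.univ →
    ∃ V : Set (Set Y), (∀ v ∈ V, IsOpen v) ∧ ⋃₀ V = Set.univ ∧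
      (∀ v ∈ V, ∃ u ∈ U, v ⊆ u) ∧
      ∀ x : Y, {v ∈ V | x ∈ v}.Finite ∧ {v ∈ V | x ∈ v}.ncard ≤ n + 1

/-- Directional derivative of `F` at `p` along the geodesic `γ` (of length `ℓ`) from `p`;
for a convex `F` the difference quotients are monotone, so the limit is the infimum. -/
def dirDeriv (F : X → ℝ) (p : X) (γ : ℝ → X) (ℓ : ℝ) : ℝ :=
  sInf {r : ℝ | ∃ s ∈ Set.Ioc 0 ℓ, r = (F (γ s) - F p) / s}

/-- Busemann function of the ray `γ`; `t ↦ dist p (γ t) - t` is non-increasing, so the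
limit as `t → ∞` is the infimum. -/
def busemann (γ : ℝ → X) (p : X) : ℝ :=
  sInf {r : ℝ | ∃ t : ℝ, 0 ≤ t ∧ r = dist p (γ t) - t}

/-- Compactness of the space of directions `Σ_p X` (sequential total boundedness of
geodesic directions at `p` in the angle metric). -/
def DirCompact (p : X) : Prop :=
  ∀ (γ : ℕ → ℝ → X) (ℓ : ℕ → ℝ), (∀ n, UnitGeodFrom p (γ n) (ℓ n)) →
    ∃ φ : ℕ → ℕ, StrictMono φ ∧
      ∀ ε : ℝ, 0 < ε → ∃ N : ℕ, ∀ m ≥ N, ∀ n ≥ N,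
        angleAt p (γ (φ m)) (γ (φ n)) < ε

/-- The angle metric between ideal points represented by the rays `γ`, `σ`:
the supremum over basepoints `p` of the angle at `p` between the representatives from `p`. -/
def idealAngle (γ σ : ℝ → X) : ℝ :=
  sSup {θ : ℝ | ∃ (p : X) (γ' σ' : ℝ → X), IsRay γ' ∧ IsRay σ' ∧ γ' 0 = p ∧ σ' 0 = p ∧
    Asymp γ' γ ∧ Asymp σ' σ ∧ θ = angleAt p γ' σ'}

/-- The radius of a subset `A` of a metric space. -/
def setRadius {B : Type*} [MetricSpace B] (A : Set B) : ℝ :=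
  ⨅ x : A, ⨆ y : A, dist (x : B) (y : B)

/-- The set of centers of `A` (points of `A` realizing the radius). -/
def centersIn {B : Type*} [MetricSpace B] (A : Set B) : Set B :=
  {x | x ∈ A ∧ (⨆ y : A, dist x (y : B)) = setRadius A}

/-- The fixed point set of an isometry `f` in the ideal boundary `B` (with class map `cls`). -/
def FixedAtInfinity {X B : Type*} [MetricSpace X] (f : X → X) (cls : (ℝ → X) → B) : Set B :=
  {b | ∃ γ : ℝ → X, IsRay γ ∧ cls γ = b ∧ Asymp (f ∘ γ) γ}

end

section Helpers

variable {X : Type*} [MetricSpace X]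


lemma my_arccos_anti {x y : ℝ} (h : x ≤ y) : Real.arccos y ≤ Real.arccos x :=
  sub_le_sub_left (Real.monotone_arcsin h) _

lemma my_midpt_convexOn_aux {f : ℝ → ℝ} {a b : ℝ}
    (hc : ContinuousOn f (Set.Icc a b))
    (hm : ∀ x ∈ Set.Icc a b, ∀ y ∈ Set.Icc a b, f ((x + y) / 2) ≤ (f x + f y) / 2) :
    ∀ x ∈ Set.Icc a b, ∀ y ∈ Set.Icc a b, x ≤ y → ∀ α β : ℝ, 0 ≤ α → 0 ≤ β → α + β = 1 →
      f (α * x + β * y) ≤ α * f x + β * f y := by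
  rintro x hx y hy hxy α β hα hβ hαβ
  obtain rfl : α = 1 - β := by linarith
  have hβ1 : β ≤ 1 := by linarith
  rcases eq_or_lt_of_le hxy with rfl | hlt
  · have h1 : (1 - β) * x + β * x = x := by ring
    have h2 : (1 - β) * f x + β * f x = f x := by ring
    rw [h1, h2]
  set sl := (f y - f x) / (y - x) with hsl
  set L : ℝ → ℝ := fun t => f x + (t - x) * sl with hL
  set g : ℝ → ℝ := fun t => f t - L t with hg
  have hyx : y - x ≠ 0 := by linarith
  have hsub : Set.Icc x y ⊆ Set.Icc a b := Set.Icc_subset_Icc hx.1 hy.2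
  have hgx : g x = 0 := by simp [hg, hL]
  have hgy : g y = 0 := by
    simp only [hg, hL, hsl]
    field_simp
    ring
  have hgm : ∀ s ∈ Set.Icc x y, ∀ t ∈ Set.Icc x y, g ((s + t) / 2) ≤ (g s + g t) / 2 := by
    intro s hs t ht
    have h1 := hm s (hsub hs) t (hsub ht)
    simp only [hg, hL]
    ring_nf
    ring_nf at h1
    linarith
  have hgc : ContinuousOn g (Set.Icc x y) := by
    apply ContinuousOn.sub (hc.mono hsub)
    fun_prop
  have hLval : L ((1 - β) * x + β * y) = (1 - β) * f x + β * f y := by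
    simp only [hL, hsl]
    have h2 : (1 - β) * x + β * y - x = β * (y - x) := by ring
    rw [h2, mul_div_assoc', mul_comm, mul_div_assoc, mul_div_assoc,
      div_self hyx, mul_one]
    ring
  have ht0 : (1 - β) * x + β * y ∈ Set.Icc x y := by
    constructor
    · nlinarith [mul_nonneg hβ (sub_nonneg.2 hxy)]
    · nlinarith [mul_nonneg (sub_nonneg.2 hβ1) (sub_nonneg.2 hxy)]
  clear_value sl L g
  obtain ⟨c, hcmem, hcmax⟩ := isCompact_Icc.exists_isMaxOn (Set.nonempty_Icc.2 hxy) hgc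
  have hgc0 : g c ≤ 0 := by
    by_contra hpos
    push_neg at hpos
    rcases le_total (c - x) (y - c) with h1 | h1
    · have hd : (2 * c - x) ∈ Set.Icc x y := by
        constructor <;> [linarith [hcmem.1]; linarith]
      have hmid := hgm x (Set.left_mem_Icc.2 hxy) _ hd
      have he : (x + (2 * c - x)) / 2 = c := by ring
      rw [he, hgx] at hmid
      have h3 : g (2 * c - x) ≤ g c := hcmax hd
      linarith
    · have hd : (2 * c - y) ∈ Set.Icc x y := by
        constructor <;> [linarith; linarith [hcmem.2]]
      have hmid := hgm _ hd y (Set.right_mem_Icc.2 hxy)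
      have he : ((2 * c - y) + y) / 2 = c := by ring
      rw [he, hgy] at hmid
      have h3 : g (2 * c - y) ≤ g c := hcmax hd
      linarith
  have hle : g ((1 - β) * x + β * y) ≤ 0 := le_trans (hcmax ht0) hgc0
  rw [hg] at hle
  simp only at hle
  rw [hLval] at hle
  linarith

lemma my_midpt_convexOn {f : ℝ → ℝ} {a b : ℝ}
    (hc : ContinuousOn f (Set.Icc a b))
    (hm : ∀ x ∈ Set.Icc a b, ∀ y ∈ Set.Icc a b, f ((x + y) / 2) ≤ (f x + f y) / 2) :
    ConvexOn ℝ (Set.Icc a b) f := by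
  refine ⟨convex_Icc a b, ?_⟩
  rintro x hx y hy α β hα hβ hαβ
  simp only [smul_eq_mul]
  rcases le_total x y with hxy | hxy
  · exact my_midpt_convexOn_aux hc hm x hx y hy hxy α β hα hβ hαβ
  · have h1 := my_midpt_convexOn_aux hc hm y hy x hx hxy β α hβ hα (by linarith)
    rw [show α * x + β * y = β * y + α * x by ring]
    linarith

end Helpers

section GeoHelpers

variable {X : Type*} [MetricSpace X]

/-- Convexity of the squared distance along geodesics, from the CN inequality. -/
lemma my_dist_sq_convex (hX : IsCAT0 X) {a b : X} {γ : ℝ → X}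
    (hγ : IsMinGeodesic γ a b) (p : X) {lam : ℝ} (h0 : 0 ≤ lam) (h1 : lam ≤ 1) :
    dist p (γ (lam * dist a b)) ^ 2 ≤
      (1 - lam) * dist p a ^ 2 + lam * dist p b ^ 2 - lam * (1 - lam) * dist a b ^ 2 := by
  set D := dist a b with hD
  have hD0 : 0 ≤ D := dist_nonneg
  set k : ℝ → ℝ := fun x => dist p (γ x) ^ 2 - x ^ 2 with hk
  have hγc : ContinuousOn γ (Set.Icc 0 D) := by
    apply LipschitzOnWith.continuousOn (K := 1)
    apply LipschitzOnWith.of_dist_le_mul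
    intro s hs t ht
    rw [hγ.2.2 hs ht]
    simp [Real.dist_eq]
  have hkc : ContinuousOn k (Set.Icc 0 D) := by
    apply ContinuousOn.sub
    · exact ((continuous_const.dist continuous_id).comp_continuousOn hγc).pow 2
    · fun_prop
  have hkm : ∀ x ∈ Set.Icc 0 D, ∀ y ∈ Set.Icc 0 D, k ((x + y) / 2) ≤ (k x + k y) / 2 := by
    intro x hx y hy
    have hmid : (x + y) / 2 ∈ Set.Icc 0 D := by
      constructor <;> [linarith [hx.1, hy.1]; linarith [hx.2, hy.2]]
    have hqm : dist (γ x) (γ ((x + y) / 2)) = dist (γ x) (γ y) / 2 := by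
      rw [hγ.2.2 hx hmid, hγ.2.2 hx hy]
      rw [abs_sub_comm x y, abs_sub_comm x ((x+y)/2)]
      rw [show (x+y)/2 - x = (y - x)/2 by ring, abs_div]
      norm_num
    have hmr : dist (γ ((x + y) / 2)) (γ y) = dist (γ x) (γ y) / 2 := by
      rw [hγ.2.2 hmid hy, hγ.2.2 hx hy]
      rw [abs_sub_comm x y, show (x+y)/2 - y = -((y - x)/2) by ring, abs_neg, abs_div]
      norm_num
    have hcn := hX.2 p (γ x) (γ y) (γ ((x + y) / 2)) hqm hmr
    have hd : dist (γ x) (γ y) = |x - y| := hγ.2.2 hx hy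
    rw [hd] at hcn
    have habs : |x - y| ^ 2 = (x - y) ^ 2 := sq_abs _
    rw [habs] at hcn
    simp only [hk]
    nlinarith [hcn]
  have hconv := my_midpt_convexOn hkc hkm
  have h00 : (0 : ℝ) ∈ Set.Icc (0:ℝ) D := Set.left_mem_Icc.2 hD0
  have hDD : D ∈ Set.Icc (0:ℝ) D := Set.right_mem_Icc.2 hD0
  have := hconv.2 h00 hDD (by linarith : (0:ℝ) ≤ 1 - lam) h0 (by ring)
  simp only [smul_eq_mul, mul_zero, zero_add] at this
  simp only [hk] at this
  have hγ0 : γ 0 = a := hγ.1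
  have hγD : γ D = b := hγ.2.1
  rw [hγ0, hγD] at this
  nlinarith [this]

/-- A unit geodesic from `p`, restricted, is a minimizing geodesic, and distances. -/
lemma my_unit_dist {p : X} {w : ℝ → X} {ℓ : ℝ} (hw : UnitGeodFrom p w ℓ)
    {t : ℝ} (ht : 0 ≤ t) (htl : t ≤ ℓ) : dist p (w t) = t := by
  have h := hw.2.2 (Set.mem_Icc.2 ⟨le_refl 0, le_of_lt hw.1⟩) (Set.mem_Icc.2 ⟨ht, htl⟩)
  rw [hw.2.1] at h
  rw [h, abs_of_nonpos (by linarith), neg_sub, sub_zero]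

lemma my_unit_isMin {p : X} {w : ℝ → X} {ℓ : ℝ} (hw : UnitGeodFrom p w ℓ)
    {t : ℝ} (ht : 0 ≤ t) (htl : t ≤ ℓ) : IsMinGeodesic w p (w t) := by
  have hd : dist p (w t) = t := my_unit_dist hw ht htl
  refine ⟨hw.2.1, by rw [hd], ?_⟩
  intro s s' hs hs'
  rw [hd] at hs hs'
  exact hw.2.2 (Set.mem_Icc.2 ⟨hs.1, le_trans hs.2 htl⟩)
    (Set.mem_Icc.2 ⟨hs'.1, le_trans hs'.2 htl⟩)

lemma my_convexOn_comp {F : X → ℝ} (hF : ConvexFun F) {p : X} {w : ℝ → X} {ℓ : ℝ}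
    (hw : UnitGeodFrom p w ℓ) : ConvexOn ℝ (Set.Icc 0 ℓ) (F ∘ w) := by
  have h := hF p (w ℓ) w (my_unit_isMin hw (le_of_lt hw.1) (le_refl ℓ))
  rwa [my_unit_dist hw (le_of_lt hw.1) (le_refl ℓ)] at h

/-- slope monotonicity from the left endpoint 0. -/
lemma my_slope_mono {f : ℝ → ℝ} {L x y : ℝ} (hf : ConvexOn ℝ (Set.Icc 0 L) f)
    (hx : 0 < x) (hxy : x ≤ y) (hy : y ≤ L) :
    (f x - f 0) / x ≤ (f y - f 0) / y := by
  have hy0 : 0 < y := lt_of_lt_of_le hx hxy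
  rcases eq_or_lt_of_le hxy with rfl | hlt
  · exact le_refl _
  have h0m : (0:ℝ) ∈ Set.Icc (0:ℝ) L := Set.left_mem_Icc.2 (by linarith)
  have hym : y ∈ Set.Icc (0:ℝ) L := Set.mem_Icc.2 ⟨le_of_lt hy0, hy⟩
  have hxy' : x / y ≤ 1 := (div_le_one hy0).2 hxy
  have key := hf.2 h0m hym (by linarith : (0:ℝ) ≤ 1 - x / y)
    (by positivity : (0:ℝ) ≤ x / y) (by ring)
  simp only [smul_eq_mul, mul_zero, zero_add] at key
  rw [div_mul_cancel₀ _ (ne_of_gt hy0)] at key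
  rw [div_le_div_iff₀ hx hy0]
  have h2 := mul_le_mul_of_nonneg_right key (le_of_lt hy0)
  have h3 : ((1 - x / y) * f 0 + x / y * f y) * y = f 0 * y - x * f 0 + x * f y := by
    field_simp
  rw [h3] at h2
  nlinarith [h2]

end GeoHelpers

section GeoHelpers2

variable {X : Type*} [MetricSpace X]

/-- Difference quotients are bounded below by `-K`. -/
lemma my_quot_lb {F : X → ℝ} (hF : ConvexFun F) {p : X} {w : ℝ → X} {ℓ : ℝ}
    (hw : UnitGeodFrom p w ℓ) {K : NNReal} {r : ℝ} (hr : 0 < r)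
    (hK : LipschitzOnWith K F (Metric.ball p r)) :
    ∀ s ∈ Set.Ioc 0 ℓ, -(K : ℝ) ≤ (F (w s) - F p) / s := by
  have hℓ : 0 < ℓ := hw.1
  set r' : ℝ := min (r / 2) ℓ with hr'
  have hr'0 : 0 < r' := lt_min (by linarith) hℓ
  have hr'ℓ : r' ≤ ℓ := min_le_right _ _
  have hsmall : ∀ s : ℝ, 0 < s → s ≤ r' → -(K : ℝ) ≤ (F (w s) - F p) / s := by
    intro s hs0 hsr
    have hds : dist p (w s) = s := my_unit_dist hw (le_of_lt hs0) (le_trans hsr hr'ℓ)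
    have hmem : w s ∈ Metric.ball p r := by
      rw [Metric.mem_ball, dist_comm, hds]
      calc s ≤ r' := hsr
        _ ≤ r / 2 := min_le_left _ _
        _ < r := by linarith
    have hpmem : p ∈ Metric.ball p r := Metric.mem_ball_self hr
    have hlipd := hK.dist_le_mul (w s) hmem p hpmem
    rw [dist_comm (w s) p, hds] at hlipd
    rw [le_div_iff₀ hs0]
    have h2 : |F (w s) - F p| ≤ (K : ℝ) * s := by
      rw [← Real.dist_eq]
      exact hlipd
    have h3 := (abs_le.1 h2).1
    linarith
  intro s hs
  rcases le_total s r' with hsr | hsr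
  · exact hsmall s hs.1 hsr
  · have h1 := hsmall r' hr'0 (le_refl _)
    have h2 := my_slope_mono (my_convexOn_comp hF hw) hr'0 hsr hs.2
    simp only [Function.comp] at h2
    rw [hw.2.1] at h2
    linarith

lemma my_quot_bdd {F : X → ℝ} (hF : ConvexFun F) {p : X} {w : ℝ → X} {ℓ : ℝ}
    (hw : UnitGeodFrom p w ℓ) {K : NNReal} {r : ℝ} (hr : 0 < r)
    (hK : LipschitzOnWith K F (Metric.ball p r)) :
    BddBelow {q : ℝ | ∃ s ∈ Set.Ioc 0 ℓ, q = (F (w s) - F p) / s} := by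
  refine ⟨-(K : ℝ), ?_⟩
  rintro q ⟨s, hs, rfl⟩
  exact my_quot_lb hF hw hr hK s hs

lemma my_dirDeriv_le {F : X → ℝ}
    (hlip : ∀ p : X, ∃ (K : NNReal) (r : ℝ), 0 < r ∧ LipschitzOnWith K F (Metric.ball p r))
    (hF : ConvexFun F) {p : X} {w : ℝ → X} {ℓ : ℝ} (hw : UnitGeodFrom p w ℓ) :
    ∀ s ∈ Set.Ioc 0 ℓ, dirDeriv F p w ℓ ≤ (F (w s) - F p) / s := by
  intro s hs
  obtain ⟨K, r, hr, hK⟩ := hlip p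
  exact csInf_le (my_quot_bdd hF hw hr hK) ⟨s, hs, rfl⟩

/-- Global lower bound from the minimality of the gradient direction. -/
lemma my_global_lb {F : X → ℝ} (hX : IsCAT0 X)
    (hlip : ∀ p : X, ∃ (K : NNReal) (r : ℝ), 0 < r ∧ LipschitzOnWith K F (Metric.ball p r))
    (hF : ConvexFun F) {p : X} {c : ℝ}
    (hmin : ∀ (w : ℝ → X) (ℓw : ℝ), UnitGeodFrom p w ℓw → c ≤ dirDeriv F p w ℓw) :
    ∀ x : X, F p + c * dist p x ≤ F x := by
  intro x
  rcases eq_or_ne p x with rfl | hne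
  · simp
  obtain ⟨w, hw⟩ := hX.1 p x
  have hL : 0 < dist p x := dist_pos.2 hne
  have hwu : UnitGeodFrom p w (dist p x) := ⟨hL, hw.1, fun s t hs ht => hw.2.2 hs ht⟩
  have h1 := hmin w (dist p x) hwu
  have h2 := my_dirDeriv_le hlip hF hwu (dist p x) ⟨hL, le_refl _⟩
  rw [hw.2.1] at h2
  have h3 : c ≤ (F x - F p) / dist p x := le_trans h1 h2
  rw [le_div_iff₀ hL] at h3
  linarith

/-- The cosine expression of a comparison angle lies in `[-1, 1]`. -/
lemma my_cos_bounds {p x y : X} (hx : 0 < dist p x) (hy : 0 < dist p y) :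
    -1 ≤ (dist p x ^ 2 + dist p y ^ 2 - dist x y ^ 2) / (2 * dist p x * dist p y) ∧
      (dist p x ^ 2 + dist p y ^ 2 - dist x y ^ 2) / (2 * dist p x * dist p y) ≤ 1 := by
  have h1 : dist x y ≤ dist p x + dist p y := by
    rw [dist_comm p x] at *
    exact dist_triangle x p y
  have h2 : dist p x ≤ dist p y + dist y x := dist_triangle p y x
  have h3 : dist p y ≤ dist p x + dist x y := dist_triangle p x y
  rw [dist_comm y x] at h2
  constructor
  · rw [le_div_iff₀ (by positivity), neg_mul]
    nlinarith [h1, dist_nonneg (x := x) (y := y)]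
  · rw [div_le_iff₀ (by positivity)]
    nlinarith [h2, h3]

lemma my_compAngle_comm (p x y : X) : compAngle p x y = compAngle p y x := by
  unfold compAngle
  rw [dist_comm y x]
  ring_nf

/-- Monotonicity of comparison angles along a geodesic in a CAT(0) space. -/
lemma my_compAngle_mono (hX : IsCAT0 X) {p : X} {w : ℝ → X} {ℓ : ℝ}
    (hw : UnitGeodFrom p w ℓ) {t' t : ℝ} (ht'0 : 0 < t') (htt : t' ≤ t) (htℓ : t ≤ ℓ)
    {y : X} (hy : 0 < dist p y) :
    compAngle p (w t') y ≤ compAngle p (w t) y := by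
  have ht0 : 0 < t := lt_of_lt_of_le ht'0 htt
  have hdt : dist p (w t) = t := my_unit_dist hw (le_of_lt ht0) htℓ
  have hdt' : dist p (w t') = t' := my_unit_dist hw (le_of_lt ht'0) (le_trans htt htℓ)
  have hgeo := my_unit_isMin hw (le_of_lt ht0) htℓ
  have hq := my_dist_sq_convex hX hgeo y (lam := t' / t)
    (by positivity) ((div_le_one ht0).2 htt)
  rw [hdt, div_mul_cancel₀ _ (ne_of_gt ht0)] at hq
  set B := dist p y with hB
  set d := dist (w t) y with hd
  set d' := dist (w t') y with hd'
  rw [dist_comm y (w t'), dist_comm y p, dist_comm y (w t)] at hq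
  -- hq : d' ^ 2 ≤ (1 - t'/t) * B ^ 2 + t'/t * d ^ 2 - t'/t * (1 - t'/t) * t ^ 2
  have h5 : t * ((1 - t' / t) * B ^ 2 + t' / t * d ^ 2 - t' / t * (1 - t' / t) * t ^ 2)
      = (t - t') * B ^ 2 + t' * d ^ 2 - t' * (t - t') * t := by
    field_simp
  have hq3 : t * d' ^ 2 ≤ (t - t') * B ^ 2 + t' * d ^ 2 - t' * (t - t') * t := by
    rw [← h5]
    exact mul_le_mul_of_nonneg_left hq (le_of_lt ht0)
  unfold compAngle
  rw [hdt, hdt', ← hB, ← hd, ← hd']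
  apply my_arccos_anti
  rw [div_le_div_iff₀ (by positivity) (by positivity)]
  nlinarith [mul_le_mul_of_nonneg_left hq3 (by positivity : (0:ℝ) ≤ 2 * B)]

end GeoHelpers2

section GeoHelpers3

variable {X : Type*} [MetricSpace X]

lemma my_compAngle_nonneg (p x y : X) : 0 ≤ compAngle p x y := Real.arccos_nonneg _

lemma my_compAngle_le_pi (p x y : X) : compAngle p x y ≤ Real.pi := Real.arccos_le_pi _

lemma my_T_nonempty (p : X) (u v : ℝ → X) {δ : ℝ} (hδ : 0 < δ) :
    {θ' : ℝ | ∃ s t : ℝ, s ∈ Set.Ioc 0 δ ∧ t ∈ Set.Ioc 0 δ ∧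
      θ' = compAngle p (u s) (v t)}.Nonempty :=
  ⟨compAngle p (u δ) (v δ), δ, δ, ⟨hδ, le_refl _⟩, ⟨hδ, le_refl _⟩, rfl⟩

lemma my_T_bddAbove (p : X) (u v : ℝ → X) (δ : ℝ) :
    BddAbove {θ' : ℝ | ∃ s t : ℝ, s ∈ Set.Ioc 0 δ ∧ t ∈ Set.Ioc 0 δ ∧
      θ' = compAngle p (u s) (v t)} := by
  refine ⟨Real.pi, ?_⟩
  rintro θ ⟨s, t, hs, ht, rfl⟩
  exact my_compAngle_le_pi _ _ _

lemma my_sSupT_nonneg (p : X) (u v : ℝ → X) {δ : ℝ} (hδ : 0 < δ) :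
    0 ≤ sSup {θ' : ℝ | ∃ s t : ℝ, s ∈ Set.Ioc 0 δ ∧ t ∈ Set.Ioc 0 δ ∧
      θ' = compAngle p (u s) (v t)} :=
  le_trans (my_compAngle_nonneg p (u δ) (v δ))
    (le_csSup (my_T_bddAbove p u v δ) ⟨δ, δ, ⟨hδ, le_refl _⟩, ⟨hδ, le_refl _⟩, rfl⟩)

lemma my_angleAt_nonneg (p : X) (u v : ℝ → X) : 0 ≤ angleAt p u v := by
  apply le_csInf
  · exact ⟨_, ⟨1, one_pos, rfl⟩⟩
  · rintro θ ⟨δ, hδ, rfl⟩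
    exact my_sSupT_nonneg p u v hδ

lemma my_angleAt_le_compAngle (hX : IsCAT0 X) {p : X} {u v : ℝ → X} {ℓu ℓv : ℝ}
    (hu : UnitGeodFrom p u ℓu) (hv : UnitGeodFrom p v ℓv)
    {δ : ℝ} (hδ0 : 0 < δ) (hδu : δ ≤ ℓu) (hδv : δ ≤ ℓv) :
    angleAt p u v ≤ compAngle p (u δ) (v δ) := by
  have h1 : angleAt p u v ≤ sSup {θ' : ℝ | ∃ s t : ℝ, s ∈ Set.Ioc 0 δ ∧ t ∈ Set.Ioc 0 δ ∧
      θ' = compAngle p (u s) (v t)} := by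
    apply csInf_le
    · refine ⟨0, ?_⟩
      rintro θ ⟨δ', hδ', rfl⟩
      exact my_sSupT_nonneg p u v hδ'
    · exact ⟨δ, hδ0, rfl⟩
  refine le_trans h1 (csSup_le (my_T_nonempty p u v hδ0) ?_)
  rintro θ ⟨s, t, hs, ht, rfl⟩
  have hvt : 0 < dist p (v t) := by
    rw [my_unit_dist hv (le_of_lt ht.1) (le_trans ht.2 hδv)]
    exact ht.1
  have huδ : 0 < dist p (u δ) := by
    rw [my_unit_dist hu (le_of_lt hδ0) hδu]
    exact hδ0
  calc compAngle p (u s) (v t) ≤ compAngle p (u δ) (v t) :=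
        my_compAngle_mono hX hu hs.1 hs.2 hδu hvt
    _ = compAngle p (v t) (u δ) := my_compAngle_comm _ _ _
    _ ≤ compAngle p (v δ) (u δ) := my_compAngle_mono hX hv ht.1 ht.2 hδv huδ
    _ = compAngle p (u δ) (v δ) := my_compAngle_comm _ _ _

end GeoHelpers3

set_option maxHeartbeats 1000000

/-- Lemma 3.4 (first variation inequality for convex functions): at a non-critical point,
`D_p F(v) ≥ -|grad_p(-F)| cos ∠_p(u_p, v)`, where `u_p` is the gradient direction. -/
theorem stmt12 {X : Type*} [MetricSpace X] [CompleteSpace X] (hX : IsCAT0 X)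
    (F : X → ℝ)
    (hlip : ∀ p : X, ∃ (K : NNReal) (r : ℝ), 0 < r ∧ LipschitzOnWith K F (Metric.ball p r))
    (hF : ConvexFun F)
    (p : X) (hcpt : DirCompact p)
    (u : ℝ → X) (ℓu : ℝ) (hu : UnitGeodFrom p u ℓu)
    (hneg : dirDeriv F p u ℓu < 0)
    (hmin : ∀ (w : ℝ → X) (ℓw : ℝ), UnitGeodFrom p w ℓw → dirDeriv F p u ℓu ≤ dirDeriv F p w ℓw) :
    ∀ (v : ℝ → X) (ℓv : ℝ), UnitGeodFrom p v ℓv →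
      dirDeriv F p v ℓv ≥ dirDeriv F p u ℓu * Real.cos (angleAt p u v) := by
  intro v ℓv hv
  set g : ℝ := -dirDeriv F p u ℓu with hg
  have hdu : dirDeriv F p u ℓu = -g := by rw [hg]; ring
  have hg0 : 0 < g := by rw [hg]; linarith
  clear_value g
  set θ := angleAt p u v with hθdef
  clear_value θ
  have hθ0 : 0 ≤ θ := by rw [hθdef]; exact my_angleAt_nonneg p u v
  rw [ge_iff_le, hdu]
  have hSv_ne : {q : ℝ | ∃ s ∈ Set.Ioc 0 ℓv, q = (F (v s) - F p) / s}.Nonempty :=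
    ⟨(F (v ℓv) - F p) / ℓv, ℓv, ⟨hv.1, le_refl _⟩, rfl⟩
  show -g * Real.cos θ ≤ sInf {q : ℝ | ∃ s ∈ Set.Ioc 0 ℓv, q = (F (v s) - F p) / s}
  apply le_csInf hSv_ne
  rintro q ⟨s₀, hs₀, rfl⟩
  apply le_of_forall_pos_le_add
  intro ε hε
  -- choose the parameters
  set lam : ℝ := min (1/4 : ℝ) (ε / (2 * g)) with hlamdef
  have hlam0 : 0 < lam := lt_min (by norm_num) (by positivity)
  have hlam4 : lam ≤ 1/4 := min_le_left _ _
  clear_value lam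
  have hglam : g * lam ≤ ε / 2 := by
    have h1 : lam ≤ ε / (2 * g) := by rw [hlamdef]; exact min_le_right _ _
    have h2 := mul_le_mul_of_nonneg_left h1 hg0.le
    have h3 : g * (ε / (2 * g)) = ε / 2 := by field_simp
    linarith [h3 ▸ h2]
  set η : ℝ := ε * lam / 2 with hηdef
  have hη0 : 0 < η := by positivity
  clear_value η
  -- extract a small scale where the `u`-quotient is close to `-g`
  have hSu_ne : {q : ℝ | ∃ s ∈ Set.Ioc 0 ℓu, q = (F (u s) - F p) / s}.Nonempty :=
    ⟨(F (u ℓu) - F p) / ℓu, ℓu, ⟨hu.1, le_refl _⟩, rfl⟩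
  have hinf : sInf {q : ℝ | ∃ s ∈ Set.Ioc 0 ℓu, q = (F (u s) - F p) / s} < -g + η := by
    have : sInf {q : ℝ | ∃ s ∈ Set.Ioc 0 ℓu, q = (F (u s) - F p) / s} = dirDeriv F p u ℓu := rfl
    rw [this, hdu]; linarith
  obtain ⟨q₀, ⟨t₀, ht₀, hq₀⟩, hq₀lt⟩ := exists_lt_of_csInf_lt hSu_ne hinf
  rw [hq₀] at hq₀lt
  set δ : ℝ := min s₀ t₀ with hδdef
  have hδ0 : 0 < δ := lt_min hs₀.1 ht₀.1
  have hδv : δ ≤ ℓv := le_trans (min_le_left _ _) hs₀.2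
  have hδu : δ ≤ ℓu := le_trans (min_le_right _ _) ht₀.2
  have hδs₀ : δ ≤ s₀ := min_le_left _ _
  clear_value δ
  -- the `u`-quotient at scale δ
  have hA : (F (u δ) - F p) / δ ≤ -g + η := by
    have hδt₀ : δ ≤ t₀ := by rw [hδdef]; exact min_le_right s₀ t₀
    have h := my_slope_mono (my_convexOn_comp hF hu) hδ0 hδt₀ ht₀.2
    simp only [Function.comp] at h
    rw [hu.2.1] at h
    linarith
  have hFa' : F (u δ) - F p ≤ (-g + η) * δ := by
    have := (div_le_iff₀ hδ0).1 hA
    linarith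
  -- comparison angle data at scale δ
  have hda : dist p (u δ) = δ := my_unit_dist hu hδ0.le hδu
  have hdb : dist p (v δ) = δ := my_unit_dist hv hδ0.le hδv
  have hpa : 0 < dist p (u δ) := by rw [hda]; exact hδ0
  have hpb : 0 < dist p (v δ) := by rw [hdb]; exact hδ0
  set c : ℝ := (dist p (u δ) ^ 2 + dist p (v δ) ^ 2 - dist (u δ) (v δ) ^ 2) /
    (2 * dist p (u δ) * dist p (v δ)) with hcdef
  clear_value c
  obtain ⟨hcm1, hc1⟩ := my_cos_bounds hpa hpb
  rw [← hcdef] at hcm1 hc1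
  have hΘ : θ ≤ compAngle p (u δ) (v δ) := by
    rw [hθdef]; exact my_angleAt_le_compAngle hX hu hv hδ0 hδu hδv
  have hcompeq : compAngle p (u δ) (v δ) = Real.arccos c := by rw [hcdef]; rfl
  have hcθ : c ≤ Real.cos θ := by
    have h1 : Real.cos (compAngle p (u δ) (v δ)) = c := by
      rw [hcompeq]; exact Real.cos_arccos hcm1 hc1
    rw [← h1]
    exact Real.cos_le_cos_of_nonneg_of_le_pi hθ0 (my_compAngle_le_pi p (u δ) (v δ)) hΘ
  -- the distance between the endpoints
  have hceq : c * (2 * dist p (u δ) * dist p (v δ)) =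
      dist p (u δ) ^ 2 + dist p (v δ) ^ 2 - dist (u δ) (v δ) ^ 2 := by
    rw [hcdef]
    exact div_mul_cancel₀ _ (by positivity)
  have hD2 : dist (u δ) (v δ) ^ 2 = 2 * δ ^ 2 - 2 * δ ^ 2 * c := by
    rw [hda, hdb] at hceq
    nlinarith [hceq]
  -- geodesic between the endpoints and the comparison point
  obtain ⟨γ, hγ⟩ := hX.1 (u δ) (v δ)
  have hQ := my_dist_sq_convex hX hγ p hlam0.le (by linarith : lam ≤ 1)
  rw [hda, hdb] at hQ
  -- bound dist p m
  have hQW : dist p (γ (lam * dist (u δ) (v δ))) ^ 2 ≤ (δ * (1 - lam + lam * c + lam ^ 2)) ^ 2 := by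
    nlinarith [hQ, hD2, sq_nonneg (δ * lam * (c + lam)),
      mul_nonneg (sq_nonneg (δ * lam)) (show (0:ℝ) ≤ 1 - 2 * lam by linarith)]
  have hWpos : 0 ≤ δ * (1 - lam + lam * c + lam ^ 2) := by nlinarith [hδ0.le, hcm1, hlam4, hlam0.le]
  have hpm : dist p (γ (lam * dist (u δ) (v δ))) ≤ δ * (1 - lam + lam * c + lam ^ 2) :=
    le_of_pow_le_pow_left₀ two_ne_zero hWpos hQW
  -- lower bound for F at the comparison point
  have hmin' : ∀ (w : ℝ → X) (ℓw : ℝ), UnitGeodFrom p w ℓw → -g ≤ dirDeriv F p w ℓw := by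
    intro w ℓw hw
    have := hmin w ℓw hw
    linarith
  have hchain := my_global_lb hX hlip hF hmin' (γ (lam * dist (u δ) (v δ)))
  -- convexity of F along γ
  have hγconv := hF (u δ) (v δ) γ hγ
  have hFab : F (γ (lam * dist (u δ) (v δ))) ≤ (1 - lam) * F (u δ) + lam * F (v δ) := by
    have h := hγconv.2 (Set.left_mem_Icc.2 dist_nonneg) (Set.right_mem_Icc.2 dist_nonneg)
      (by linarith : (0:ℝ) ≤ 1 - lam) hlam0.le (by ring)
    simp only [smul_eq_mul, mul_zero, zero_add, Function.comp] at h
    rw [hγ.1, hγ.2.1] at h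
    exact h
  -- the main estimate
  have hpm'' : g * dist p (γ (lam * dist (u δ) (v δ))) ≤
      g * (δ * (1 - lam + lam * c + lam ^ 2)) := mul_le_mul_of_nonneg_left hpm hg0.le
  have hFa'' : (1 - lam) * (F (u δ) - F p) ≤ (1 - lam) * ((-g + η) * δ) :=
    mul_le_mul_of_nonneg_left hFa' (by linarith)
  have hM : δ * (-(g * lam * c) - g * lam ^ 2 - (1 - lam) * η) ≤ lam * (F (v δ) - F p) := by
    linarith [hchain, hFab, hpm'', hFa'']
  have H1 : 0 ≤ δ * lam * (g * (Real.cos θ - c)) :=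
    mul_nonneg (mul_nonneg hδ0.le hlam0.le) (mul_nonneg hg0.le (sub_nonneg.2 hcθ))
  have H2 : δ * lam * (g * lam) ≤ δ * lam * (ε / 2) :=
    mul_le_mul_of_nonneg_left hglam (mul_nonneg hδ0.le hlam0.le)
  have H4 : δ * η = δ * (ε * lam / 2) := by rw [hηdef]
  have H5 : 0 ≤ δ * lam * η := mul_nonneg (mul_nonneg hδ0.le hlam0.le) hη0.le
  have hM2 : (-g * Real.cos θ - ε) * δ * lam ≤ δ * (-(g * lam * c) - g * lam ^ 2 - (1 - lam) * η) := by
    linarith [H1, H2, H4, H5]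
  have hM3 : (-g * Real.cos θ - ε) * δ ≤ F (v δ) - F p := by
    have h4 : lam * ((-g * Real.cos θ - ε) * δ) ≤ lam * (F (v δ) - F p) := by
      linarith [le_trans hM2 hM]
    exact (mul_le_mul_iff_right₀ hlam0).1 h4
  have hquotδ : -g * Real.cos θ - ε ≤ (F (v δ) - F p) / δ := by
    rw [le_div_iff₀ hδ0]
    exact hM3
  -- transfer to scale s₀ by slope monotonicity
  have hslope := my_slope_mono (my_convexOn_comp hF hv) hδ0 hδs₀ hs₀.2
  simp only [Function.comp] at hslope
  rw [hv.2.1] at hslope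
  linarith
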